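/- Main Theorem 4.1: Let (H_λ, π) be an irreducible unitary representation of G, B = B(H_λ) the algebra of all operators on H_λ, and for T ∈ B define dT ∈ B ⊗ g' by (dT)(X) = [π_X, T]. Let g_λ be the sum of the minimal ideals of g on which π is faithful (so g = g_λ ⊕ ker π), and identify g_λ' with the functionals on g vanishing on ker π. Then the B-bimodule generated by the range of d is exactly B ⊗ g_λ'. In particular, if π is faithful on g, the B-bimodule generated by the range of d is all of B ⊗ g'. -/

import Mathlib

set_option linter.unusedSectionVars false
set_option maxHeartbeats 1000000


/-!
STATEMENT 15 (Main Theorem 4.1).  `G` is a compact connected semisimple Lie group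
with Lie algebra `𝔤` (encoded by positive definiteness of the negative of the
Killing form), and `(H_λ, π)` an irreducible unitary representation of `G`,
encoded by the induced irreducible representation `π₀` of `𝔤` by skew-adjoint
operators.  `B = B(H_λ)` is the algebra of all operators on `H_λ`, and
`B ⊗ 𝔤'` is realized as the `B`-bimodule of `ℝ`-linear maps `𝔤 → B`.  The
derivation `d : B → B ⊗ 𝔤'` is `(dT)(X) = ⁅π_X, T⁆ = π₀ X * T - T * π₀ X`.
`genBimod` is the `B`-sub-bimodule generated by the range of `d`: the smallest
subspace containing all `dT` and stable under left and right multiplication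
by elements of `B`.

The theorem: `genBimod` is exactly `B ⊗ 𝔤_λ'`, the maps `ω : 𝔤 → B` vanishing
on the kernel `𝔤₀ = ker π₀` (so that, identifying `𝔤 = 𝔤_λ ⊕ 𝔤₀`, it is
`B ⊗ 𝔤_λ'`); in particular, if `π₀` is faithful, it is all of `B ⊗ 𝔤'`.
-/

open scoped TensorProduct InnerProductSpace

section

variable (𝔤 : Type*) [LieRing 𝔤] [LieAlgebra ℝ 𝔤] [Module.Finite ℝ 𝔤]
variable (H : Type*) [NormedAddCommGroup H] [InnerProductSpace ℂ H] [FiniteDimensional ℂ H]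

/-- `(dT)(X) = [π_X, T]`, as an `ℝ`-linear map from `𝔤` to `B = B(H)`. -/
noncomputable def dmap (π₀ : 𝔤 →ₗ[ℝ] Module.End ℂ H) (T : Module.End ℂ H) :
    𝔤 →ₗ[ℝ] Module.End ℂ H :=
  (LinearMap.mulRight ℝ T - LinearMap.mulLeft ℝ T) ∘ₗ π₀

/-- The `B`-sub-bimodule of `B ⊗ 𝔤' = Hom_ℝ(𝔤, B)` generated by the range of `d`:
the smallest subspace that contains every `dT` and is stable under left and right
multiplication by operators. -/
noncomputable def genBimod (π₀ : 𝔤 →ₗ[ℝ] Module.End ℂ H) :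
    Submodule ℂ (𝔤 →ₗ[ℝ] Module.End ℂ H) :=
  sInf {M : Submodule ℂ (𝔤 →ₗ[ℝ] Module.End ℂ H) |
    (∀ T : Module.End ℂ H, dmap 𝔤 H π₀ T ∈ M) ∧
    (∀ ω ∈ M, ∀ S : Module.End ℂ H,
      (LinearMap.mulLeft ℝ S ∘ₗ ω) ∈ M ∧ (LinearMap.mulRight ℝ S ∘ₗ ω) ∈ M)}

end



section AuxDefs

variable {H : Type*} [NormedAddCommGroup H] [InnerProductSpace ℂ H] [FiniteDimensional ℂ H]

/-- rank one operator `w ↦ ⟪v, w⟫ • u`. -/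
noncomputable def rk (u v : H) : Module.End ℂ H := (innerₛₗ ℂ v).smulRight u

lemma rk_apply (u v w : H) : rk u v w = (inner ℂ v w : ℂ) • u := rfl

/-- matrix coefficient functional `C ↦ ⟪ξ, C η⟫`, real-linear. -/
noncomputable def cfun (ξ η : H) : Module.End ℂ H →ₗ[ℝ] ℂ where
  toFun C := (inner ℂ ξ (C η) : ℂ)
  map_add' C D := by simp [inner_add_right]
  map_smul' r C := by
    simp only [LinearMap.smul_apply, RingHom.id_apply]
    rw [RCLike.real_smul_eq_coe_smul (K := ℂ) r (C η), inner_smul_right,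
      Complex.real_smul]
    norm_num

lemma cfun_apply (ξ η : H) (C : Module.End ℂ H) : cfun ξ η C = (inner ℂ ξ (C η) : ℂ) := rfl

end AuxDefs

section Perfect

variable (𝔤 : Type*) [LieRing 𝔤] [LieAlgebra ℝ 𝔤] [Module.Finite ℝ 𝔤]

lemma killing_injective (hcpt : ∀ X : 𝔤, X ≠ 0 → 0 < - killingForm ℝ 𝔤 X X) :
    Function.Injective (killingForm ℝ 𝔤) := by
  rw [← LinearMap.ker_eq_bot, Submodule.eq_bot_iff]
  intro X hX
  by_contra hne
  have h0 : killingForm ℝ 𝔤 X X = 0 := by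
    rw [LinearMap.mem_ker] at hX; rw [hX]; rfl
  have := hcpt X hne
  rw [h0] at this; simp at this

lemma span_brackets_eq_top (hcpt : ∀ X : 𝔤, X ≠ 0 → 0 < - killingForm ℝ 𝔤 X X) :
    Submodule.span ℝ {z : 𝔤 | ∃ Y Z : 𝔤, ⁅Y, Z⁆ = z} = ⊤ := by
  set I := Submodule.span ℝ {z : 𝔤 | ∃ Y Z : 𝔤, ⁅Y, Z⁆ = z} with hI
  by_contra h
  rw [Submodule.eq_top_iff'] at h
  push_neg at h
  obtain ⟨x, hx⟩ := h
  have hq : I.mkQ x ≠ 0 := by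
    rw [Submodule.mkQ_apply, ne_eq, Submodule.Quotient.mk_eq_zero]; exact hx
  obtain ⟨g, hg⟩ : ∃ g : Module.Dual ℝ (𝔤 ⧸ I), g (I.mkQ x) ≠ 0 := by
    by_contra hgg
    push_neg at hgg
    exact hq ((Module.forall_dual_apply_eq_zero_iff ℝ _).1 hgg)
  have hinj := killing_injective 𝔤 hcpt
  have hsurj : Function.Surjective (killingForm ℝ 𝔤) :=
    (LinearMap.injective_iff_surjective_of_finrank_eq_finrank
      Subspace.dual_finrank_eq.symm).1 hinj
  obtain ⟨X₀, hX₀⟩ := hsurj (g ∘ₗ I.mkQ)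
  have hX₀ne : X₀ ≠ 0 := by
    rintro rfl
    rw [map_zero] at hX₀
    exact hg (by rw [← LinearMap.comp_apply, ← hX₀]; rfl)
  have hbr : ∀ Y : 𝔤, ⁅X₀, Y⁆ = 0 := by
    intro Y
    apply hinj
    rw [map_zero]
    apply LinearMap.ext
    intro Z
    have h1 : killingForm ℝ 𝔤 ⁅X₀, Y⁆ Z = killingForm ℝ 𝔤 X₀ ⁅Y, Z⁆ :=
      LieModule.traceForm_apply_lie_apply ℝ 𝔤 𝔤 X₀ Y Z
    have h2 : killingForm ℝ 𝔤 X₀ ⁅Y, Z⁆ = 0 := by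
      rw [hX₀]
      show g (I.mkQ ⁅Y, Z⁆) = 0
      rw [show I.mkQ ⁅Y, Z⁆ = 0 by
        rw [Submodule.mkQ_apply, Submodule.Quotient.mk_eq_zero]
        exact Submodule.subset_span ⟨Y, Z, rfl⟩]
      exact map_zero g
    simp [h1, h2]
  have had : LieAlgebra.ad ℝ 𝔤 X₀ = 0 := by
    apply LinearMap.ext; intro Y
    simp [LieAlgebra.ad_apply, hbr Y]
  have hzero : killingForm ℝ 𝔤 X₀ X₀ = 0 := by
    show LinearMap.trace ℝ 𝔤 (LieAlgebra.ad ℝ 𝔤 X₀ ∘ₗ LieAlgebra.ad ℝ 𝔤 X₀) = 0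
    rw [had]
    simp
  have := hcpt X₀ hX₀ne
  rw [hzero] at this; simp at this

end Perfect

section Main

variable (𝔤 : Type*) [LieRing 𝔤] [LieAlgebra ℝ 𝔤] [Module.Finite ℝ 𝔤]
variable (H : Type*) [NormedAddCommGroup H] [InnerProductSpace ℂ H] [FiniteDimensional ℂ H]

lemma dmap_apply (π₀ : 𝔤 →ₗ[ℝ] Module.End ℂ H) (T : Module.End ℂ H) (X : 𝔤) :
    dmap 𝔤 H π₀ T X = π₀ X * T - T * π₀ X := rfl

lemma mem_genBimod [Nontrivial H]
    (hcpt : ∀ X : 𝔤, X ≠ 0 → 0 < - killingForm ℝ 𝔤 X X)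
    (π₀ : 𝔤 →ₗ[ℝ] Module.End ℂ H)
    (hπbracket : ∀ X Y : 𝔤, π₀ ⁅X, Y⁆ = π₀ X * π₀ Y - π₀ Y * π₀ X)
    (hskew : ∀ X : 𝔤, LinearMap.adjoint (π₀ X : H →ₗ[ℂ] H) = - (π₀ X : H →ₗ[ℂ] H))
    (ω : 𝔤 →ₗ[ℝ] Module.End ℂ H) (hω : ∀ X : 𝔤, π₀ X = 0 → ω X = 0) :
    ω ∈ genBimod 𝔤 H π₀ := by
  classical
  rw [genBimod, Submodule.mem_sInf]
  rintro N ⟨hd, hmulclose⟩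
  -- Step 1: rank-one coefficient elements lie in N
  have hrank1 : ∀ (T : Module.End ℂ H) (ξ η u v : H),
      ((cfun ξ η) ∘ₗ dmap 𝔤 H π₀ T).smulRight (rk u v) ∈ N := by
    intro T ξ η u v
    have h1 := (hmulclose _ (hd T) (rk η v)).2
    have h2 := (hmulclose _ h1 (rk u ξ)).1
    have key : ((cfun ξ η) ∘ₗ dmap 𝔤 H π₀ T).smulRight (rk u v)
        = LinearMap.mulLeft ℝ (rk u ξ) ∘ₗ (LinearMap.mulRight ℝ (rk η v) ∘ₗ dmap 𝔤 H π₀ T) := by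
      apply LinearMap.ext; intro X; apply LinearMap.ext; intro w
      simp only [LinearMap.smulRight_apply, LinearMap.comp_apply, LinearMap.mulLeft_apply,
        LinearMap.mulRight_apply, LinearMap.smul_apply, cfun_apply, rk_apply,
        Module.End.mul_apply, map_smul, inner_smul_right, smul_smul]
      ring_nf
    rw [key]; exact h2
  -- Step 2: coefficient elements with arbitrary operator lie in N
  have hcoef : ∀ (T : Module.End ℂ H) (ξ η : H) (S : Module.End ℂ H),
      ((cfun ξ η) ∘ₗ dmap 𝔤 H π₀ T).smulRight S ∈ N := by
    intro T ξ η S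
    set b := stdOrthonormalBasis ℂ H with hb
    have hdec : ((cfun ξ η) ∘ₗ dmap 𝔤 H π₀ T).smulRight S
        = ∑ k, ((cfun ξ η) ∘ₗ dmap 𝔤 H π₀ T).smulRight (rk (S (b k)) (b k)) := by
      apply LinearMap.ext; intro X; apply LinearMap.ext; intro w
      simp only [LinearMap.smulRight_apply, LinearMap.sum_apply, LinearMap.smul_apply, rk_apply]
      rw [← Finset.smul_sum]
      congr 1
      have hrep := b.sum_repr' w
      conv_lhs => rw [← hrep]
      rw [map_sum]
      simp [map_smul]
    rw [hdec]
    exact Submodule.sum_mem _ fun k _ => hrank1 T ξ η (S (b k)) (b k)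
  -- Step 3: conjugates of coefficient functionals
  have hconj : ∀ (T : Module.End ℂ H) (ξ η : H) (X : 𝔤),
      (starRingEnd ℂ) ((cfun ξ η) ((dmap 𝔤 H π₀ T) X))
        = (cfun η ξ) ((dmap 𝔤 H π₀ (LinearMap.adjoint T)) X) := by
    intro T ξ η X
    simp only [cfun_apply]
    rw [inner_conj_symm]
    have hadj : LinearMap.adjoint (dmap 𝔤 H π₀ T X) = dmap 𝔤 H π₀ (LinearMap.adjoint T) X := by
      rw [dmap_apply, dmap_apply, map_sub]
      rw [Module.End.mul_eq_comp, Module.End.mul_eq_comp, LinearMap.adjoint_comp,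
        LinearMap.adjoint_comp, hskew X]
      simp only [LinearMap.comp_neg, LinearMap.neg_comp, ← Module.End.mul_eq_comp]
      noncomm_ring
    rw [← hadj, ← LinearMap.adjoint_inner_right]
  -- the real span of real parts of coefficient functionals
  set U : Submodule ℝ (𝔤 →ₗ[ℝ] ℝ) :=
    Submodule.span ℝ {φ | ∃ T ξ η, φ = Complex.reLm ∘ₗ ((cfun ξ η) ∘ₗ dmap 𝔤 H π₀ T)} with hU
  -- Step 4: for every φ ∈ U and every S, the element (ofReal ∘ φ) ⊗ S lies in N
  have hAgen : ∀ φ ∈ U, ∀ S : Module.End ℂ H,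
      (Complex.ofRealAm.toLinearMap ∘ₗ φ).smulRight S ∈ N := by
    intro φ hφ S
    induction hφ using Submodule.span_induction with
    | mem f hf =>
      obtain ⟨T, ξ, η, rfl⟩ := hf
      have key : (Complex.ofRealAm.toLinearMap ∘ₗ
            (Complex.reLm ∘ₗ ((cfun ξ η) ∘ₗ dmap 𝔤 H π₀ T))).smulRight S
          = (2⁻¹ : ℂ) • ((((cfun ξ η) ∘ₗ dmap 𝔤 H π₀ T).smulRight S)
            + (((cfun η ξ) ∘ₗ dmap 𝔤 H π₀ (LinearMap.adjoint T)).smulRight S)) := by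
        apply LinearMap.ext; intro X
        simp only [LinearMap.smulRight_apply, LinearMap.comp_apply, LinearMap.smul_apply,
          LinearMap.add_apply, Complex.reLm_coe, AlgHom.toLinearMap_apply]
        rw [← hconj T ξ η X]
        rw [smul_add, smul_smul, smul_smul, ← add_smul]
        congr 1
        set z := (cfun ξ η) ((dmap 𝔤 H π₀ T) X)
        show (z.re : ℂ) = 2⁻¹ * z + 2⁻¹ * (starRingEnd ℂ) z
        rw [show (2⁻¹ : ℂ) * z + 2⁻¹ * (starRingEnd ℂ) z = 2⁻¹ * (z + (starRingEnd ℂ) z) by ring,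
          Complex.add_conj]
        push_cast
        ring
      rw [key]
      exact Submodule.smul_mem _ _ (Submodule.add_mem _ (hcoef T ξ η S)
        (hcoef (LinearMap.adjoint T) η ξ S))
    | zero =>
      have : (Complex.ofRealAm.toLinearMap ∘ₗ (0 : 𝔤 →ₗ[ℝ] ℝ)).smulRight S = 0 := by
        apply LinearMap.ext; intro X; simp
      rw [this]; exact Submodule.zero_mem N
    | add f g _ _ hf hg =>
      have : (Complex.ofRealAm.toLinearMap ∘ₗ (f + g)).smulRight S
          = (Complex.ofRealAm.toLinearMap ∘ₗ f).smulRight S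
            + (Complex.ofRealAm.toLinearMap ∘ₗ g).smulRight S := by
        apply LinearMap.ext; intro X; simp [add_smul]
      rw [this]; exact Submodule.add_mem _ hf hg
    | smul r f _ hf =>
      have : (Complex.ofRealAm.toLinearMap ∘ₗ (r • f)).smulRight S
          = (r : ℂ) • (Complex.ofRealAm.toLinearMap ∘ₗ f).smulRight S := by
        apply LinearMap.ext; intro X
        simp only [LinearMap.smulRight_apply, LinearMap.comp_apply, LinearMap.smul_apply,
          AlgHom.toLinearMap_apply, smul_smul]
        show (((r • f X : ℝ)) : ℂ) • S = ((r : ℂ) * ((f X : ℝ) : ℂ)) • S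
        rw [smul_eq_mul, Complex.ofReal_mul]
      rw [this]; exact Submodule.smul_mem _ _ hf
  -- trace of every π₀ Y vanishes, since 𝔤 is perfect
  have htrace : ∀ Y : 𝔤, LinearMap.trace ℂ H (π₀ Y) = 0 := by
    intro Y
    have hY : Y ∈ Submodule.span ℝ {z : 𝔤 | ∃ Y Z : 𝔤, ⁅Y, Z⁆ = z} := by
      rw [span_brackets_eq_top 𝔤 hcpt]; trivial
    induction hY using Submodule.span_induction with
    | mem z hz =>
      obtain ⟨Y', Z', rfl⟩ := hz
      rw [hπbracket, map_sub, LinearMap.trace_mul_comm, sub_self]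
    | zero => simp
    | add a b _ _ ha hb => rw [map_add, map_add, ha, hb, add_zero]
    | smul r a _ ha => rw [map_smul, LinearMap.map_smul_of_tower, ha, smul_zero]
  -- Step 5: common kernel of U is contained in ker π₀
  have hker : ∀ X : 𝔤, (∀ φ ∈ U, φ X = 0) → π₀ X = 0 := by
    intro X hX
    have hgen : ∀ (T : Module.End ℂ H) (ξ η : H),
        ((cfun ξ η) ((dmap 𝔤 H π₀ T) X)).re = 0 := by
      intro T ξ η
      exact hX _ (Submodule.subset_span ⟨T, ξ, η, rfl⟩) 
    have hc : ∀ (T : Module.End ℂ H) (ξ η : H),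
        (inner ℂ ξ ((dmap 𝔤 H π₀ T X) η) : ℂ) = 0 := by
      intro T ξ η
      have h1 := hgen T ξ η
      have h2 := hgen T ξ (Complex.I • η)
      rw [cfun_apply] at h1 h2
      rw [map_smul, inner_smul_right] at h2
      apply Complex.ext
      · exact h1
      · simpa [Complex.mul_re] using h2
    have hcomm : ∀ T : Module.End ℂ H, dmap 𝔤 H π₀ T X = 0 := by
      intro T
      apply LinearMap.ext; intro η
      have := hc T ((dmap 𝔤 H π₀ T X) η) η
      rw [inner_self_eq_zero] at this
      simpa using this
    obtain ⟨v, hv⟩ := exists_ne (0 : H)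
    have hvv : (inner ℂ v v : ℂ) ≠ 0 := fun h => hv (inner_self_eq_zero.1 h)
    set A := π₀ X with hA
    have hAw : ∀ w : H, (inner ℂ v v : ℂ) • A w = (inner ℂ v (A v) : ℂ) • w := by
      intro w
      have h := hcomm (rk w v)
      rw [dmap_apply, sub_eq_zero] at h
      have h2 := LinearMap.congr_fun h v
      simp only [Module.End.mul_apply, rk_apply] at h2
      rw [map_smul] at h2
      exact h2
    set c : ℂ := (inner ℂ v v : ℂ)⁻¹ * (inner ℂ v (A v) : ℂ) with hc'
    have hAc : A = c • 1 := by
      apply LinearMap.ext; intro w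
      have := hAw w
      have h3 : A w = (inner ℂ v v : ℂ)⁻¹ • ((inner ℂ v (A v) : ℂ) • w) := by
        rw [← this, smul_smul, inv_mul_cancel₀ hvv, one_smul]
      rw [h3]
      simp [hc', smul_smul, LinearMap.smul_apply, Module.End.one_apply]
    -- trace of A is zero since 𝔤 is perfect
    have htr : LinearMap.trace ℂ H A = 0 := htrace X
    rw [hAc, map_smul, LinearMap.trace_one] at htr
    have hn : (Module.finrank ℂ H : ℂ) ≠ 0 :=
      Nat.cast_ne_zero.2 Module.finrank_pos.ne'
    have hc0 : c = 0 := by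
      rw [smul_eq_mul] at htr
      exact (mul_eq_zero.1 htr).resolve_right hn
    rw [hAc, hc0, zero_smul]
  -- Step 6: duality — every functional vanishing on ker π₀ lies in U
  have hUmem : ∀ φ : 𝔤 →ₗ[ℝ] ℝ, (∀ X : 𝔤, π₀ X = 0 → φ X = 0) → φ ∈ U := by
    intro φ hφ
    have hmem : φ ∈ U.dualCoannihilator.dualAnnihilator := by
      rw [Submodule.mem_dualAnnihilator]
      intro X hXmem
      rw [Submodule.mem_dualCoannihilator] at hXmem
      exact hφ X (hker X hXmem)
    rwa [Subspace.dualCoannihilator_dualAnnihilator_eq] at hmem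
  -- Step 7: assemble ω from coefficient functionals
  set b := Module.finBasis ℂ (Module.End ℂ H) with hbB
  have hre : ∀ j, Complex.reLm ∘ₗ (((b.coord j).restrictScalars ℝ) ∘ₗ ω) ∈ U := by
    intro j
    apply hUmem
    intro X hX
    simp [hω X hX]
  have him : ∀ j, Complex.imLm ∘ₗ (((b.coord j).restrictScalars ℝ) ∘ₗ ω) ∈ U := by
    intro j
    apply hUmem
    intro X hX
    simp [hω X hX]
  have hdecomp : ω = ∑ j, ((Complex.ofRealAm.toLinearMap ∘ₗ
        (Complex.reLm ∘ₗ (((b.coord j).restrictScalars ℝ) ∘ₗ ω))).smulRight (b j)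
      + (Complex.ofRealAm.toLinearMap ∘ₗ
        (Complex.imLm ∘ₗ (((b.coord j).restrictScalars ℝ) ∘ₗ ω))).smulRight (Complex.I • b j)) := by
    apply LinearMap.ext; intro X
    simp only [LinearMap.sum_apply, LinearMap.add_apply, LinearMap.smulRight_apply,
      LinearMap.comp_apply, LinearMap.restrictScalars_apply, AlgHom.toLinearMap_apply,
      Complex.reLm_coe, Complex.imLm_coe]
    have hterm : ∀ j, (Complex.ofRealAm ((b.coord j) (ω X)).re : ℂ) • b j
        + (Complex.ofRealAm ((b.coord j) (ω X)).im : ℂ) • (Complex.I • b j)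
        = (b.repr (ω X)) j • b j := by
      intro j
      rw [smul_smul, ← add_smul]
      congr 1
      · show ((((b.coord j) (ω X)).re : ℝ) : ℂ) + ((((b.coord j) (ω X)).im : ℝ) : ℂ) * Complex.I
          = (b.repr (ω X)) j
        rw [Complex.re_add_im]
        rw [Module.Basis.coord_apply]
    rw [Finset.sum_congr rfl fun j _ => hterm j]
    exact (b.sum_repr (ω X)).symm
  rw [hdecomp]
  exact Submodule.sum_mem _ fun j _ => Submodule.add_mem _
    (hAgen _ (hre j) (b j)) (hAgen _ (him j) (Complex.I • b j))

end Main

theorem statement15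
    (𝔤 : Type*) [LieRing 𝔤] [LieAlgebra ℝ 𝔤] [Module.Finite ℝ 𝔤]
    -- 𝔤 is the Lie algebra of a compact connected semisimple Lie group
    (hcpt : ∀ X : 𝔤, X ≠ 0 → 0 < - killingForm ℝ 𝔤 X X)
    (H : Type*) [NormedAddCommGroup H] [InnerProductSpace ℂ H] [FiniteDimensional ℂ H]
    [Nontrivial H]
    -- the induced representation of 𝔤: by skew-adjoint operators, irreducible
    (π₀ : 𝔤 →ₗ[ℝ] Module.End ℂ H)
    (hπbracket : ∀ X Y : 𝔤, π₀ ⁅X, Y⁆ = π₀ X * π₀ Y - π₀ Y * π₀ X)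
    (hskew : ∀ X : 𝔤, LinearMap.adjoint (π₀ X : H →ₗ[ℂ] H) = - (π₀ X : H →ₗ[ℂ] H))
    (hirr : ∀ p : Submodule ℂ H, (∀ (X : 𝔤), ∀ v ∈ p, π₀ X v ∈ p) → p = ⊥ ∨ p = ⊤) :
    -- the bimodule generated by the range of d is B ⊗ 𝔤_λ', the maps vanishing
    -- on 𝔤₀ = ker π₀ ...
    (genBimod 𝔤 H π₀ : Set (𝔤 →ₗ[ℝ] Module.End ℂ H)) =
      {ω : 𝔤 →ₗ[ℝ] Module.End ℂ H | ∀ X : 𝔤, π₀ X = 0 → ω X = 0} ∧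
    (Function.Injective π₀ → genBimod 𝔤 H π₀ = ⊤) := by
  classical
  -- the submodule of maps vanishing on the kernel of π₀
  let M' : Submodule ℂ (𝔤 →ₗ[ℝ] Module.End ℂ H) :=
    { carrier := {ω : 𝔤 →ₗ[ℝ] Module.End ℂ H | ∀ X : 𝔤, π₀ X = 0 → ω X = 0}
      add_mem' := fun {a b} ha hb X hX => by
        simp only [LinearMap.add_apply, ha X hX, hb X hX, add_zero]
      zero_mem' := fun X hX => rfl
      smul_mem' := fun c ω h X hX => by
        simp only [LinearMap.smul_apply, h X hX, smul_zero] }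
  have hM' : M' ∈ {M : Submodule ℂ (𝔤 →ₗ[ℝ] Module.End ℂ H) |
      (∀ T : Module.End ℂ H, dmap 𝔤 H π₀ T ∈ M) ∧
      (∀ ω ∈ M, ∀ S : Module.End ℂ H,
        (LinearMap.mulLeft ℝ S ∘ₗ ω) ∈ M ∧ (LinearMap.mulRight ℝ S ∘ₗ ω) ∈ M)} := by
    constructor
    · intro T X hX
      rw [dmap_apply, hX, zero_mul, mul_zero, sub_zero]
    · intro ω hω S
      constructor
      · intro X hX
        simp only [LinearMap.comp_apply, LinearMap.mulLeft_apply, hω X hX, mul_zero]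
      · intro X hX
        simp only [LinearMap.comp_apply, LinearMap.mulRight_apply, hω X hX, zero_mul]
  have hmain : (genBimod 𝔤 H π₀ : Set (𝔤 →ₗ[ℝ] Module.End ℂ H)) =
      {ω : 𝔤 →ₗ[ℝ] Module.End ℂ H | ∀ X : 𝔤, π₀ X = 0 → ω X = 0} := by
    apply subset_antisymm
    · intro ω hωmem
      have hmem : ω ∈ genBimod 𝔤 H π₀ := hωmem
      rw [genBimod, Submodule.mem_sInf] at hmem
      exact hmem M' hM'
    · intro ω hω
      exact mem_genBimod 𝔤 H hcpt π₀ hπbracket hskew ω hω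
  refine ⟨hmain, ?_⟩
  intro hinj
  rw [eq_top_iff]
  intro ω _
  apply mem_genBimod 𝔤 H hcpt π₀ hπbracket hskew ω
  intro X hX
  have : X = 0 := hinj (by rw [hX, map_zero])
  rw [this, map_zero]
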